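/- Let x be in the support of the common distribution of i.i.d. random vectors X_1, X_2, ... in R^p, and let X_{(1),n} be the nearest neighbor of x among X_1,...,X_n. Let μ: R^p → R be a bounded continuous function. Then E[μ(X_{(1),n})] converges to μ(x) as n → ∞. -/

import Mathlib

open MeasureTheory ProbabilityTheory Filter

/-- If `x` is in the support of the common law of i.i.d. random vectors
`X 0, X 1, ...` in `ℝ^p`, `NN n` is the nearest neighbor of `x` among the first `n` points,
and `μf` is bounded and continuous, then `E[μf (NN n)] → μf x` as `n → ∞`. -/
theorem stmt1 {p : ℕ} {Ω : Type*} [MeasureSpace Ω] [IsProbabilityMeasure (ℙ : Measure Ω)]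
    (X : ℕ → Ω → EuclideanSpace ℝ (Fin p)) (hXmeas : ∀ j, Measurable (X j))
    (hindep : iIndepFun X ℙ)
    (hid : ∀ j, IdentDistrib (X j) (X 0) ℙ ℙ)
    (x : EuclideanSpace ℝ (Fin p))
    (hsupp : ∀ ε > (0 : ℝ), 0 < ℙ {ω | dist (X 0 ω) x < ε})
    (NN : ℕ → Ω → EuclideanSpace ℝ (Fin p)) (hNNmeas : ∀ n, Measurable (NN n))
    (hNN : ∀ n, 1 ≤ n → ∀ ω, ∃ j < n, NN n ω = X j ω ∧
      ∀ i < n, dist (NN n ω) x ≤ dist (X i ω) x)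
    (μf : EuclideanSpace ℝ (Fin p) → ℝ) (hμc : Continuous μf)
    (hμb : ∃ C, ∀ y, |μf y| ≤ C) :
    Tendsto (fun n => ∫ ω, μf (NN n ω) ∂ℙ) atTop (nhds (μf x)) := by
  obtain ⟨C, hC⟩ := hμb
  -- Step 1: for every ε > 0, a.s. some X i is within ε of x
  have key : ∀ ε : ℝ, 0 < ε → ℙ (⋂ i, X i ⁻¹' {y | ε ≤ dist y x}) = 0 := by
    intro ε hε
    set B : Set (EuclideanSpace ℝ (Fin p)) := {y | ε ≤ dist y x} with hBdef
    have hBmeas : MeasurableSet B :=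
      (isClosed_le continuous_const (continuous_id.dist continuous_const)).measurableSet
    set r : ENNReal := ℙ (X 0 ⁻¹' B) with hrdef
    have hcompl : (X 0 ⁻¹' B)ᶜ = {ω | dist (X 0 ω) x < ε} := by
      ext ω; simp [hBdef, not_le]
    have hr1 : r < 1 := by
      have hpos : 0 < ℙ ((X 0 ⁻¹' B)ᶜ) := by rw [hcompl]; exact hsupp ε hε
      have hsum : r + ℙ ((X 0 ⁻¹' B)ᶜ) = 1 :=
        prob_add_prob_compl ((hXmeas 0) hBmeas)
      calc r < r + ℙ ((X 0 ⁻¹' B)ᶜ) :=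
            ENNReal.lt_add_right (measure_ne_top _ _) (ne_of_gt hpos)
        _ = 1 := hsum
    have hbound : ∀ n : ℕ, ℙ (⋂ i, X i ⁻¹' B) ≤ r ^ n := by
      intro n
      have hsub : (⋂ i, X i ⁻¹' B) ⊆ ⋂ i ∈ Finset.range n, X i ⁻¹' B := by
        intro ω hω
        simp only [Set.mem_iInter] at hω ⊢
        exact fun i _ => hω i
      have heq : ℙ (⋂ i ∈ Finset.range n, X i ⁻¹' B)
          = ∏ i ∈ Finset.range n, ℙ (X i ⁻¹' B) :=
        hindep.measure_inter_preimage_eq_mul (Finset.range n) (sets := fun _ => B)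
          (fun i _ => hBmeas)
      have hfac : ∀ i, ℙ (X i ⁻¹' B) = r := by
        intro i
        rw [hrdef, ← Measure.map_apply (hXmeas i) hBmeas,
          ← Measure.map_apply (hXmeas 0) hBmeas, (hid i).map_eq]
      calc ℙ (⋂ i, X i ⁻¹' B) ≤ ℙ (⋂ i ∈ Finset.range n, X i ⁻¹' B) := measure_mono hsub
        _ = ∏ i ∈ Finset.range n, ℙ (X i ⁻¹' B) := heq
        _ = r ^ n := by simp [hfac]
    have htend : Tendsto (fun n : ℕ => r ^ n) atTop (nhds 0) :=
      ENNReal.tendsto_pow_atTop_nhds_zero_of_lt_one hr1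
    exact le_zero_iff.mp (ge_of_tendsto' htend hbound)
  -- Step 2: NN n → x almost surely
  have hAe : ∀ᵐ ω ∂(ℙ : Measure Ω), Tendsto (fun n => NN n ω) atTop (nhds x) := by
    have h0 : ℙ (⋃ k : ℕ, ⋂ i, X i ⁻¹' {y | 1 / ((k : ℝ) + 1) ≤ dist y x}) = 0 :=
      measure_iUnion_null fun k => key _ (by positivity)
    have h1 : ∀ᵐ ω ∂(ℙ : Measure Ω),
        ω ∉ ⋃ k : ℕ, ⋂ i, X i ⁻¹' {y | 1 / ((k : ℝ) + 1) ≤ dist y x} :=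
      measure_eq_zero_iff_ae_notMem.mp h0
    filter_upwards [h1] with ω hω
    rw [Metric.tendsto_atTop]
    intro ε hε
    obtain ⟨k, hk⟩ := exists_nat_one_div_lt hε
    simp only [Set.mem_iUnion, Set.mem_iInter, Set.mem_preimage, Set.mem_setOf_eq,
      not_exists, not_forall, not_le] at hω
    obtain ⟨i, hi⟩ := hω k
    refine ⟨i + 1, fun n hn => ?_⟩
    obtain ⟨j, hj, hje, hjmin⟩ := hNN n (le_trans (Nat.le_add_left 1 i) hn) ω
    calc dist (NN n ω) x ≤ dist (X i ω) x := hjmin i (lt_of_lt_of_le (Nat.lt_succ_self i) hn)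
      _ < 1 / ((k : ℝ) + 1) := hi
      _ < ε := hk
  -- Step 3: dominated convergence
  have hint : Tendsto (fun n => ∫ ω, μf (NN n ω) ∂ℙ) atTop
      (nhds (∫ _ω, μf x ∂(ℙ : Measure Ω))) := by
    refine tendsto_integral_of_dominated_convergence (fun _ => C) ?_ (integrable_const C) ?_ ?_
    · exact fun n => (hμc.measurable.comp (hNNmeas n)).aestronglyMeasurable
    · exact fun n => Filter.Eventually.of_forall fun ω => by
        simpa [Real.norm_eq_abs] using hC (NN n ω)
    · exact hAe.mono fun ω hω => ((hμc.tendsto x).comp hω)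
  simpa [integral_const] using hint
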